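/- Let (V, Q) be a positive definite quadratic space over ℚ, p an odd prime, γ_p the least quadratic non-residue mod p, and x₁, x₂ ∈ V linearly independent with integer Gram matrix G. If ν_p(det G) is odd, then γ_p·Q(x₁) is not represented by the subspace ℚx₁ + ℚx₂. -/

import Mathlib

/-- Let `(V, Q)` be a positive definite quadratic space over `ℚ`, `p` an odd prime,
`γ` the least quadratic non-residue mod `p`, and `x₁, x₂ ∈ V` linearly independent
with integer Gram matrix `G`.  If `ν_p(det G)` is odd, then `γ·Q(x₁)` is not
represented by `ℚx₁ + ℚx₂`. -/
lemma descent (p : ℕ) (hp : p.Prime) (c : ℤ) (hc : ¬ ((p:ℤ) ∣ c)) (γ : ℕ)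
    (hγ : ¬ IsSquare ((γ : ZMod p))) :
    ∀ n : ℕ, ∀ M U W : ℤ, M.natAbs = n → M ≠ 0 →
      U^2 + ((p:ℤ)*c)*W^2 = (γ:ℤ) * M^2 → False := by
  haveI : Fact p.Prime := ⟨hp⟩
  have hpZ : Prime (p : ℤ) := Nat.prime_iff_prime_int.mp hp
  intro n
  induction n using Nat.strong_induction_on with
  | _ n ih =>
    intro M U W hn hM heq
    by_cases hpM : (p:ℤ) ∣ M
    · obtain ⟨M', rfl⟩ := hpM
      have hM' : M' ≠ 0 := by rintro rfl; simp at hM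
      have hp0 : (p:ℤ) ≠ 0 := by exact_mod_cast hp.ne_zero
      have hpU : (p:ℤ) ∣ U := by
        refine hpZ.dvd_of_dvd_pow (n := 2) ⟨(γ:ℤ)*p*M'^2 - c*W^2, ?_⟩
        linear_combination heq
      obtain ⟨U', rfl⟩ := hpU
      have heq2 : (p:ℤ)*U'^2 + c*W^2 = (γ:ℤ)*((p:ℤ)*M'^2) := by
        apply mul_left_cancel₀ hp0
        linear_combination heq
      have hpW : (p:ℤ) ∣ W := by
        have h1 : (p:ℤ) ∣ c * W^2 := ⟨(γ:ℤ)*M'^2 - U'^2, by linear_combination heq2⟩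
        have h2 : (p:ℤ) ∣ W^2 := (hpZ.dvd_mul.mp h1).resolve_left hc
        exact hpZ.dvd_of_dvd_pow h2
      obtain ⟨W', rfl⟩ := hpW
      have heq3 : U'^2 + ((p:ℤ)*c)*W'^2 = (γ:ℤ)*M'^2 := by
        apply mul_left_cancel₀ (pow_ne_zero 2 hp0)
        linear_combination (p:ℤ) * heq2
      refine ih M'.natAbs ?_ M' U' W' rfl hM' heq3
      subst hn
      rw [Int.natAbs_mul]
      have h1 : 1 < p := hp.one_lt
      have h2 : 0 < M'.natAbs := Int.natAbs_pos.mpr hM'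
      calc M'.natAbs = 1 * M'.natAbs := (one_mul _).symm
        _ < (p:ℤ).natAbs * M'.natAbs := by
            exact Nat.mul_lt_mul_of_lt_of_le (by simpa using h1) le_rfl h2
    · have hMp : ((M : ZMod p)) ≠ 0 := by
        rwa [Ne, ZMod.intCast_zmod_eq_zero_iff_dvd]
      apply hγ
      refine ⟨(U : ZMod p) * (M : ZMod p)⁻¹, ?_⟩
      have h0 : ((U : ZMod p))^2 = (γ:ZMod p) * (M : ZMod p)^2 := by
        have := congrArg (fun z : ℤ => (z : ZMod p)) heq
        push_cast at this
        simpa [ZMod.natCast_self] using this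
      field_simp
      linear_combination -h0

theorem stmt10 (p : ℕ) (hp : p.Prime) (hodd : p ≠ 2) (γ : ℕ)
    (hγns : ¬ IsSquare ((γ : ZMod p)))
    (hγleast : ∀ m : ℕ, m < γ → IsSquare ((m : ZMod p)))
    (V : Type) [AddCommGroup V] [Module ℚ V] (Q : QuadraticForm ℚ V)
    (hpos : ∀ x : V, x ≠ 0 → 0 < Q x)
    (x₁ x₂ : V) (hli : LinearIndependent ℚ ![x₁, x₂])
    (G : Matrix (Fin 2) (Fin 2) ℤ)
    (hG : ∀ i j, (G i j : ℚ) = QuadraticMap.polar (⇑Q) (![x₁, x₂] i) (![x₁, x₂] j) / 2)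
    (hval : Odd (padicValInt p G.det)) :
    ¬ ∃ a b : ℚ, Q (a • x₁ + b • x₂) = (γ : ℚ) * Q x₁ := by
  rintro ⟨a, b, heq⟩
  -- Gram entries
  have hA : ((G 0 0 : ℤ) : ℚ) = Q x₁ := by
    have h := hG 0 0
    simp only [Matrix.cons_val_zero] at h
    rw [QuadraticMap.polar_self, two_smul] at h
    rw [h]; ring
  have hC : ((G 1 1 : ℤ) : ℚ) = Q x₂ := by
    have h := hG 1 1
    simp only [Matrix.cons_val_one, Matrix.head_cons, Matrix.cons_val_zero] at h
    rw [QuadraticMap.polar_self, two_smul] at h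
    rw [h]; ring
  have hB2 : QuadraticMap.polar (⇑Q) x₁ x₂ = 2 * ((G 0 1 : ℤ) : ℚ) := by
    have h := hG 0 1
    simp only [Matrix.cons_val_zero, Matrix.cons_val_one, Matrix.head_cons] at h
    rw [h]; ring
  have hBsym : ((G 1 0 : ℤ) : ℚ) = ((G 0 1 : ℤ) : ℚ) := by
    rw [hG 1 0, hG 0 1]
    simp only [Matrix.cons_val_zero, Matrix.cons_val_one, Matrix.head_cons]
    rw [QuadraticMap.polar_comm]
  -- expansion
  have e1 : Q (a • x₁ + b • x₂)
      = a*a*Q x₁ + b*b*Q x₂ + a*(b*QuadraticMap.polar (⇑Q) x₁ x₂) := by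
    rw [QuadraticMap.map_add (⇑Q), Q.map_smul, Q.map_smul, QuadraticMap.polar_smul_left,
      QuadraticMap.polar_smul_right]
    simp [smul_eq_mul]
  rw [hB2] at e1
  have hexp : a^2*((G 0 0:ℤ):ℚ) + 2*a*b*((G 0 1:ℤ):ℚ) + b^2*((G 1 1:ℤ):ℚ)
      = (γ:ℚ)*((G 0 0:ℤ):ℚ) := by
    rw [hA, hC]
    linear_combination e1.symm + heq
  -- determinant
  have hdet : ((G.det : ℤ):ℚ) = ((G 0 0:ℤ):ℚ)*((G 1 1:ℤ):ℚ) - ((G 0 1:ℤ):ℚ)^2 := by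
    rw [Matrix.det_fin_two]
    push_cast
    rw [hBsym]; ring
  -- positivity
  have hx₁ : x₁ ≠ 0 := by
    have := hli.ne_zero 0
    simpa using this
  have hApos : (0:ℚ) < ((G 0 0:ℤ):ℚ) := by rw [hA]; exact hpos x₁ hx₁
  have hAne : (G 0 0 : ℤ) ≠ 0 := by
    intro h; rw [h] at hApos; simp at hApos
  -- key rational identity
  set u : ℚ := a*((G 0 0:ℤ):ℚ) + b*((G 0 1:ℤ):ℚ) with hu
  have key : u^2 + ((G.det:ℤ):ℚ)*b^2 = (γ:ℚ)*((G 0 0:ℤ):ℚ)^2 := by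
    rw [hdet]
    linear_combination ((G 0 0:ℤ):ℚ) * hexp
  -- clear denominators
  set U : ℤ := u.num * (b.den:ℤ) with hU
  set W : ℤ := b.num * (u.den:ℤ) with hW
  set n : ℤ := (u.den:ℤ) * (b.den:ℤ) with hn
  have hud : ((u.den:ℚ)) ≠ 0 := by exact_mod_cast u.den_ne_zero
  have hbd : ((b.den:ℚ)) ≠ 0 := by exact_mod_cast b.den_ne_zero
  have hnum_u : (u.num : ℚ) = u * u.den := (div_eq_iff hud).mp (Rat.num_div_den u)
  have hnum_b : (b.num : ℚ) = b * b.den := (div_eq_iff hbd).mp (Rat.num_div_den b)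
  have hUq : (U:ℚ) = u * ((n:ℤ):ℚ) := by
    rw [hU, hn]; push_cast; rw [hnum_u]; ring
  have hWq : (W:ℚ) = b * ((n:ℤ):ℚ) := by
    rw [hW, hn]; push_cast; rw [hnum_b]; ring
  have hnne : (n:ℤ) ≠ 0 := by
    rw [hn]
    exact mul_ne_zero (by exact_mod_cast u.den_ne_zero) (by exact_mod_cast b.den_ne_zero)
  set M : ℤ := G 0 0 * n with hM
  have hMne : M ≠ 0 := mul_ne_zero hAne hnne
  have keyZq : (U:ℚ)^2 + ((G.det:ℤ):ℚ)*(W:ℚ)^2 = (γ:ℚ)*((M:ℤ):ℚ)^2 := by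
    rw [hUq, hWq, hM]
    rw [Int.cast_mul (G 0 0) n]
    linear_combination ((n:ℤ):ℚ)^2 * key
  have keyZ : U^2 + G.det*W^2 = (γ:ℤ)*M^2 := by exact_mod_cast keyZq
  -- decompose the determinant
  have hdet0 : G.det ≠ 0 := by
    intro h
    rw [h, padicValInt.zero] at hval
    exact (by decide : ¬ Odd 0) hval
  obtain ⟨s, hs⟩ := hval
  have hN0 : G.det.natAbs ≠ 0 := by simpa using hdet0
  have hfeq : (G.det.natAbs).factorization p = 2*s+1 := by
    rw [Nat.factorization_def _ hp]
    have : padicValInt p G.det = padicValNat p G.det.natAbs := rfl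
    rw [← this]; omega
  have hfac : (p:ℤ)^(2*s+1) * ((G.det.natAbs / p ^ (2*s+1) : ℕ):ℤ) = (G.det.natAbs:ℤ) := by
    have h := Nat.ordProj_mul_ordCompl_eq_self G.det.natAbs p
    rw [hfeq] at h
    exact_mod_cast h
  have hc₀ : ¬ (p:ℤ) ∣ ((G.det.natAbs / p ^ (2*s+1) : ℕ):ℤ) := by
    have h := Nat.not_dvd_ordCompl hp hN0
    rw [hfeq] at h
    exact_mod_cast h
  set c : ℤ := G.det.sign * ((G.det.natAbs / p ^ (2*s+1) : ℕ):ℤ) with hc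
  have hsign : G.det.sign = 1 ∨ G.det.sign = -1 := by
    rcases lt_trichotomy G.det 0 with h|h|h
    · right; exact Int.sign_eq_neg_one_of_neg h
    · exact absurd h hdet0
    · left; exact Int.sign_eq_one_of_pos h
  have hdc : G.det = (p:ℤ)^(2*s+1) * c := by
    rw [hc, ← mul_assoc, mul_comm ((p:ℤ)^(2*s+1)) G.det.sign, mul_assoc, hfac,
      Int.sign_mul_natAbs]
  have hcnd : ¬ (p:ℤ) ∣ c := by
    intro hd
    apply hc₀
    rcases hsign with h|h <;> rw [hc, h] at hd
    · simpa using hd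
    · simpa using hd.neg_right
  have final : U^2 + ((p:ℤ)*c)*((p:ℤ)^s*W)^2 = (γ:ℤ)*M^2 := by
    have hpow : (p:ℤ)^(2*s+1) = (p:ℤ)*((p:ℤ)^s)^2 := by
      rw [pow_succ, two_mul, pow_add]; ring
    rw [hdc, hpow] at keyZ
    linear_combination keyZ
  exact descent p hp c hcnd γ hγns M.natAbs M U ((p:ℤ)^s*W) rfl hMne final
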